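/- For θ ∈ ℝ define X_θ : ℝ² → ℝ⁴ by X_θ(u, v) := cos θ · (sinh u · sin u, sinh u · cos u, cosh u · sinh v, cosh u · cosh v) + sin θ · (−cos u · cos v, sin u · cos v, cosh v · sin v, sinh v · sin v). Then for all (u, v) ∈ ℝ²: ∂_u∂_u X_θ + ∂_v∂_v X_θ = 2·(cos θ · cosh u + sin θ · cos v)·(cos u, −sin u, sinh v, cosh v). Moreover the vector (cos u, −sin u, sinh v, cosh v) is Lorentz-null and never zero; consequently, at every point where cos θ · cosh u + sin θ · cos v ≠ 0, the vector ∂_u∂_u X_θ + ∂_v∂_v X_θ is a nonzero null vector (so the mean curvature vector of the surface parametrized by X_θ is null and nowhere vanishing there). -/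

import Mathlib

/-- The Lorentz bilinear form on ℝ⁴ (Lorentz–Minkowski space 𝕃⁴). -/
def lorR (x y : Fin 4 → ℝ) : ℝ := x 0 * y 0 + x 1 * y 1 + x 2 * y 2 - x 3 * y 3

/-- Partial derivative of a map `ℝ² → ℝ⁴` in the first variable. -/
noncomputable def pd1 (X : ℝ → ℝ → Fin 4 → ℝ) (u v : ℝ) : Fin 4 → ℝ :=
  fun i => deriv (fun t => X t v i) u

/-- Partial derivative of a map `ℝ² → ℝ⁴` in the second variable. -/
noncomputable def pd2 (X : ℝ → ℝ → Fin 4 → ℝ) (u v : ℝ) : Fin 4 → ℝ :=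
  fun i => deriv (fun t => X u t i) v

/-- Second partial derivative `∂_u ∂_u` of a map `ℝ² → ℝ⁴`. -/
noncomputable def pd11 (X : ℝ → ℝ → Fin 4 → ℝ) (u v : ℝ) : Fin 4 → ℝ :=
  fun i => deriv (fun t => deriv (fun s => X s v i) t) u

/-- Second partial derivative `∂_v ∂_v` of a map `ℝ² → ℝ⁴`. -/
noncomputable def pd22 (X : ℝ → ℝ → Fin 4 → ℝ) (u v : ℝ) : Fin 4 → ℝ :=
  fun i => deriv (fun t => deriv (fun s => X u s i) t) v

private lemma dd_eq (f f' f'' : ℝ → ℝ) (h1 : ∀ x, HasDerivAt f (f' x) x)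
    (h2 : ∀ x, HasDerivAt f' (f'' x) x) (u : ℝ) :
    deriv (fun t => deriv f t) u = f'' u := by
  have e : (fun t => deriv f t) = f' := funext fun t => (h1 t).deriv
  rw [e]; exact (h2 u).deriv

section families
open Real
variable (a b c : ℝ)

private lemma fam0u : ∀ x : ℝ, HasDerivAt (fun s => a*(sinh s*sin s) + b*(-(cos s*cos c)))
    (a*(cosh x*sin x + sinh x*cos x) + b*(sin x*cos c)) x := by
  intro x
  have h := (((Real.hasDerivAt_sinh x).mul (Real.hasDerivAt_sin x)).const_mul a).add
    ((((Real.hasDerivAt_cos x).mul_const (cos c)).neg).const_mul b)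
  exact h.congr_deriv (by ring)

private lemma fam0u' : ∀ x : ℝ, HasDerivAt
    (fun s => a*(cosh s*sin s + sinh s*cos s) + b*(sin s*cos c))
    (2*a*(cosh x*cos x) + b*(cos x*cos c)) x := by
  intro x
  have h := ((((Real.hasDerivAt_cosh x).mul (Real.hasDerivAt_sin x)).add
      ((Real.hasDerivAt_sinh x).mul (Real.hasDerivAt_cos x))).const_mul a).add
    (((Real.hasDerivAt_sin x).mul_const (cos c)).const_mul b)
  exact h.congr_deriv (by ring)

private lemma fam1u : ∀ x : ℝ, HasDerivAt (fun s => a*(sinh s*cos s) + b*(sin s*cos c))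
    (a*(cosh x*cos x - sinh x*sin x) + b*(cos x*cos c)) x := by
  intro x
  have h := (((Real.hasDerivAt_sinh x).mul (Real.hasDerivAt_cos x)).const_mul a).add
    (((Real.hasDerivAt_sin x).mul_const (cos c)).const_mul b)
  exact h.congr_deriv (by ring)

private lemma fam1u' : ∀ x : ℝ, HasDerivAt
    (fun s => a*(cosh s*cos s - sinh s*sin s) + b*(cos s*cos c))
    (-(2*a*(cosh x*sin x)) - b*(sin x*cos c)) x := by
  intro x
  have h := ((((Real.hasDerivAt_cosh x).mul (Real.hasDerivAt_cos x)).sub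
      ((Real.hasDerivAt_sinh x).mul (Real.hasDerivAt_sin x))).const_mul a).add
    (((Real.hasDerivAt_cos x).mul_const (cos c)).const_mul b)
  exact h.congr_deriv (by ring)

private lemma fam2u : ∀ x : ℝ, HasDerivAt (fun s => a*(cosh s*b) + c)
    (a*(sinh x*b)) x := by
  intro x
  have h := (((Real.hasDerivAt_cosh x).mul_const b).const_mul a).add (hasDerivAt_const x c)
  exact h.congr_deriv (by ring)

private lemma fam2u' : ∀ x : ℝ, HasDerivAt (fun s => a*(sinh s*b))
    (a*(cosh x*b)) x := by
  intro x
  exact ((Real.hasDerivAt_sinh x).mul_const b).const_mul a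

private lemma fam0v : ∀ x : ℝ, HasDerivAt (fun s => c + b*(-(a*cos s)))
    (b*(a*sin x)) x := by
  intro x
  have h := (hasDerivAt_const x c).add
    ((((Real.hasDerivAt_cos x).const_mul a).neg).const_mul b)
  exact h.congr_deriv (by ring)

private lemma fam0v' : ∀ x : ℝ, HasDerivAt (fun s => b*(a*sin s))
    (b*(a*cos x)) x := by
  intro x
  exact ((Real.hasDerivAt_sin x).const_mul a).const_mul b

private lemma fam1v : ∀ x : ℝ, HasDerivAt (fun s => c + b*(a*cos s))
    (-(b*(a*sin x))) x := by
  intro x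
  have h := (hasDerivAt_const x c).add (((Real.hasDerivAt_cos x).const_mul a).const_mul b)
  exact h.congr_deriv (by ring)

private lemma fam1v' : ∀ x : ℝ, HasDerivAt (fun s => -(b*(a*sin s)))
    (-(b*(a*cos x))) x := by
  intro x
  exact (((Real.hasDerivAt_sin x).const_mul a).const_mul b).neg

private lemma fam2v : ∀ x : ℝ, HasDerivAt (fun s => a*(c*sinh s) + b*(cosh s*sin s))
    (a*(c*cosh x) + b*(sinh x*sin x + cosh x*cos x)) x := by
  intro x
  have h := (((Real.hasDerivAt_sinh x).const_mul c).const_mul a).add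
    (((Real.hasDerivAt_cosh x).mul (Real.hasDerivAt_sin x)).const_mul b)
  exact h.congr_deriv (by ring)

private lemma fam2v' : ∀ x : ℝ, HasDerivAt
    (fun s => a*(c*cosh s) + b*(sinh s*sin s + cosh s*cos s))
    (a*(c*sinh x) + 2*b*(sinh x*cos x)) x := by
  intro x
  have h := (((Real.hasDerivAt_cosh x).const_mul c).const_mul a).add
    ((((Real.hasDerivAt_sinh x).mul (Real.hasDerivAt_sin x)).add
      ((Real.hasDerivAt_cosh x).mul (Real.hasDerivAt_cos x))).const_mul b)
  exact h.congr_deriv (by ring)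

private lemma fam3v : ∀ x : ℝ, HasDerivAt (fun s => a*(c*cosh s) + b*(sinh s*sin s))
    (a*(c*sinh x) + b*(cosh x*sin x + sinh x*cos x)) x := by
  intro x
  have h := (((Real.hasDerivAt_cosh x).const_mul c).const_mul a).add
    (((Real.hasDerivAt_sinh x).mul (Real.hasDerivAt_sin x)).const_mul b)
  exact h.congr_deriv (by ring)

private lemma fam3v' : ∀ x : ℝ, HasDerivAt
    (fun s => a*(c*sinh s) + b*(cosh s*sin s + sinh s*cos s))
    (a*(c*cosh x) + 2*b*(cosh x*cos x)) x := by
  intro x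
  have h := (((Real.hasDerivAt_sinh x).const_mul c).const_mul a).add
    ((((Real.hasDerivAt_cosh x).mul (Real.hasDerivAt_sin x)).add
      ((Real.hasDerivAt_sinh x).mul (Real.hasDerivAt_cos x))).const_mul b)
  exact h.congr_deriv (by ring)

end families

/-- The Laplacian of `X_θ` is a multiple of a nowhere-vanishing null vector:
the mean curvature vector of `X_θ` is null and nowhere zero where
`cos θ cosh u + sin θ cos v ≠ 0`. -/
theorem stmt_17 (θ : ℝ) (X : ℝ → ℝ → Fin 4 → ℝ)
    (hX : ∀ u v, X u v = fun i =>
      Real.cos θ * ![Real.sinh u * Real.sin u, Real.sinh u * Real.cos u,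
        Real.cosh u * Real.sinh v, Real.cosh u * Real.cosh v] i
      + Real.sin θ * ![-(Real.cos u * Real.cos v), Real.sin u * Real.cos v,
        Real.cosh v * Real.sin v, Real.sinh v * Real.sin v] i) :
    ∀ u v,
      (∀ i, pd11 X u v i + pd22 X u v i
        = 2 * (Real.cos θ * Real.cosh u + Real.sin θ * Real.cos v) *
            ![Real.cos u, -Real.sin u, Real.sinh v, Real.cosh v] i) ∧
      lorR ![Real.cos u, -Real.sin u, Real.sinh v, Real.cosh v]
        ![Real.cos u, -Real.sin u, Real.sinh v, Real.cosh v] = 0 ∧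
      (![Real.cos u, -Real.sin u, Real.sinh v, Real.cosh v] : Fin 4 → ℝ) ≠ 0 ∧
      (Real.cos θ * Real.cosh u + Real.sin θ * Real.cos v ≠ 0 →
        lorR (fun i => pd11 X u v i + pd22 X u v i)
          (fun i => pd11 X u v i + pd22 X u v i) = 0 ∧
        (fun i => pd11 X u v i + pd22 X u v i) ≠ (0 : Fin 4 → ℝ)) := by
  intro u v
  set a := Real.cos θ with ha
  set b := Real.sin θ with hb
  have h11_0 : pd11 X u v 0 = 2*a*(Real.cosh u*Real.cos u) + b*(Real.cos u*Real.cos v) := by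
    show deriv (fun t => deriv (fun s => X s v 0) t) u = _
    have e : (fun s => X s v 0)
        = (fun s => a*(Real.sinh s*Real.sin s) + b*(-(Real.cos s*Real.cos v))) := by
      funext s; rw [hX]; simp
    rw [e]
    exact dd_eq _ _ _ (fam0u a b v) (fam0u' a b v) u
  have h11_1 : pd11 X u v 1 = -(2*a*(Real.cosh u*Real.sin u)) - b*(Real.sin u*Real.cos v) := by
    show deriv (fun t => deriv (fun s => X s v 1) t) u = _
    have e : (fun s => X s v 1)
        = (fun s => a*(Real.sinh s*Real.cos s) + b*(Real.sin s*Real.cos v)) := by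
      funext s; rw [hX]; simp
    rw [e]
    exact dd_eq _ _ _ (fam1u a b v) (fam1u' a b v) u
  have h11_2 : pd11 X u v 2 = a*(Real.cosh u*Real.sinh v) := by
    show deriv (fun t => deriv (fun s => X s v 2) t) u = _
    have e : (fun s => X s v 2)
        = (fun s => a*(Real.cosh s*Real.sinh v) + b*(Real.cosh v*Real.sin v)) := by
      funext s; rw [hX]; simp
    rw [e]
    exact dd_eq _ _ _ (fam2u a (Real.sinh v) (b*(Real.cosh v*Real.sin v)))
      (fam2u' a (Real.sinh v)) u
  have h11_3 : pd11 X u v 3 = a*(Real.cosh u*Real.cosh v) := by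
    show deriv (fun t => deriv (fun s => X s v 3) t) u = _
    have e : (fun s => X s v 3)
        = (fun s => a*(Real.cosh s*Real.cosh v) + b*(Real.sinh v*Real.sin v)) := by
      funext s; rw [hX]; simp
    rw [e]
    exact dd_eq _ _ _ (fam2u a (Real.cosh v) (b*(Real.sinh v*Real.sin v)))
      (fam2u' a (Real.cosh v)) u
  have h22_0 : pd22 X u v 0 = b*(Real.cos u*Real.cos v) := by
    show deriv (fun t => deriv (fun s => X u s 0) t) v = _
    have e : (fun s => X u s 0)
        = (fun s => a*(Real.sinh u*Real.sin u) + b*(-(Real.cos u*Real.cos s))) := by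
      funext s; rw [hX]; simp
    rw [e]
    exact dd_eq _ _ _ (fam0v (Real.cos u) b (a*(Real.sinh u*Real.sin u)))
      (fam0v' (Real.cos u) b) v
  have h22_1 : pd22 X u v 1 = -(b*(Real.sin u*Real.cos v)) := by
    show deriv (fun t => deriv (fun s => X u s 1) t) v = _
    have e : (fun s => X u s 1)
        = (fun s => a*(Real.sinh u*Real.cos u) + b*(Real.sin u*Real.cos s)) := by
      funext s; rw [hX]; simp
    rw [e]
    exact dd_eq _ _ _ (fam1v (Real.sin u) b (a*(Real.sinh u*Real.cos u)))
      (fam1v' (Real.sin u) b) v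
  have h22_2 : pd22 X u v 2 = a*(Real.cosh u*Real.sinh v) + 2*b*(Real.sinh v*Real.cos v) := by
    show deriv (fun t => deriv (fun s => X u s 2) t) v = _
    have e : (fun s => X u s 2)
        = (fun s => a*(Real.cosh u*Real.sinh s) + b*(Real.cosh s*Real.sin s)) := by
      funext s; rw [hX]; simp
    rw [e]
    exact dd_eq _ _ _ (fam2v a b (Real.cosh u)) (fam2v' a b (Real.cosh u)) v
  have h22_3 : pd22 X u v 3 = a*(Real.cosh u*Real.cosh v) + 2*b*(Real.cosh v*Real.cos v) := by
    show deriv (fun t => deriv (fun s => X u s 3) t) v = _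
    have e : (fun s => X u s 3)
        = (fun s => a*(Real.cosh u*Real.cosh s) + b*(Real.sinh s*Real.sin s)) := by
      funext s; rw [hX]; simp
    rw [e]
    exact dd_eq _ _ _ (fam3v a b (Real.cosh u)) (fam3v' a b (Real.cosh u)) v
  have hlap : ∀ i, pd11 X u v i + pd22 X u v i
      = 2 * (a * Real.cosh u + b * Real.cos v) *
          ![Real.cos u, -Real.sin u, Real.sinh v, Real.cosh v] i := by
    intro i
    match i with
    | 0 => rw [h11_0, h22_0]; simp [Matrix.cons_val_zero]; ring
    | 1 => rw [h11_1, h22_1]; simp [Matrix.cons_val_one]; ring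
    | 2 => rw [h11_2, h22_2]; simp; ring
    | 3 => rw [h11_3, h22_3]; simp; ring
  have hsum : (fun i => pd11 X u v i + pd22 X u v i)
      = (fun i => 2 * (a * Real.cosh u + b * Real.cos v) *
          ![Real.cos u, -Real.sin u, Real.sinh v, Real.cosh v] i) := funext hlap
  have key : (Real.cos u)*(Real.cos u) + (-Real.sin u)*(-Real.sin u)
      + (Real.sinh v)*(Real.sinh v) - (Real.cosh v)*(Real.cosh v) = 0 := by
    have h1 := Real.sin_sq_add_cos_sq u
    have h2 := Real.cosh_sq v
    nlinarith [h1, h2]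
  have hnull : lorR ![Real.cos u, -Real.sin u, Real.sinh v, Real.cosh v]
      ![Real.cos u, -Real.sin u, Real.sinh v, Real.cosh v] = 0 := by
    simpa [lorR] using key
  refine ⟨hlap, hnull, ?_, ?_⟩
  · intro h
    have := congrFun h 3
    simp at this
    exact (Real.cosh_pos v).ne' this
  · intro hc
    constructor
    · rw [hsum]
      simp only [lorR]
      simp only [Matrix.cons_val_zero, Matrix.cons_val_one, Matrix.head_cons,
        Matrix.cons_val_two, Matrix.tail_cons, Matrix.cons_val_three]
      linear_combination (2 * (a * Real.cosh u + b * Real.cos v))^2 * key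
    · intro h
      have h3 := congrFun h 3
      rw [hlap 3] at h3
      have h4 : (2 * (a * Real.cosh u + b * Real.cos v)) * Real.cosh v = 0 := by
        simpa using h3
      rcases mul_eq_zero.1 h4 with h5 | h5
      · exact hc (by linarith [mul_eq_zero.1 h5])
      · exact (Real.cosh_pos v).ne' h5
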